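/- Let n₁, n₂ be positive integers and let f : 𝒰 = ℝ₊² × ℋ_{n₁} × ℋ_{n₂} → ℂ be a C² function that is holomorphic, i.e. ∂f/∂w̄_α := (1/2)(∂f/∂s_α + i ∂f/∂t_α) = 0 and Z̄_{αj} f := ∂f/∂z̄_{αj} − i z_{αj} ∂f/∂s_α = 0 for all j = 1,…,n_α and α = 1,2. Then f satisfies the two heat equations (∂/∂t_α + Δ_α) f = 0 on 𝒰 for α = 1,2, where Δ_α = −(1/(4 n_α)) ∑_{j=1}^{2 n_α} X_{αj}² is the sub-Laplacian acting in the variables g_α = (s_α, z_α). -/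

import Mathlib

noncomputable section

/-- A point of the Heisenberg group ℋ_n : `(s, z) ∈ ℝ × ℂⁿ`. -/
abbrev Heis (n : ℕ) := ℝ × (Fin n → ℂ)

/-- The flat-model ambient space `(t₁, t₂, g₁, g₂)`. -/
abbrev FlatPt (n₁ n₂ : ℕ) := ℝ × ℝ × Heis n₁ × Heis n₂

/-- The left-invariant vector field `X_j = ∂/∂x_j + 2 x_{n+j} ∂/∂s` applied to `f`. -/
def XD {n : ℕ} (j : Fin n) (f : Heis n → ℂ) (g : Heis n) : ℂ :=
  fderiv ℝ f g (2 * (g.2 j).im, Pi.single j 1)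

/-- The left-invariant vector field `X_{n+j} = ∂/∂x_{n+j} − 2 x_j ∂/∂s` applied to `f`. -/
def YD {n : ℕ} (j : Fin n) (f : Heis n → ℂ) (g : Heis n) : ℂ :=
  fderiv ℝ f g (-2 * (g.2 j).re, Pi.single j Complex.I)

/-- The sub-Laplacian `Δ = −(1/(4n)) ∑_{j=1}^{2n} X_j²` applied to `f`. -/
def subLaplacian (n : ℕ) (f : Heis n → ℂ) (g : Heis n) : ℂ :=
  -(1 / (4 * (n : ℂ))) * ∑ j : Fin n, (XD j (XD j f) g + YD j (YD j f) g)

/-- The holomorphy equations on the flat model. -/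
def IsFlatHolomorphicAt (n₁ n₂ : ℕ) (f : FlatPt n₁ n₂ → ℂ) (p : FlatPt n₁ n₂) : Prop :=
  (1/2 : ℂ) * (fderiv ℝ f p (0, 0, (1, 0), 0) + Complex.I * fderiv ℝ f p (1, 0, 0, 0)) = 0 ∧
  (1/2 : ℂ) * (fderiv ℝ f p (0, 0, 0, (1, 0)) + Complex.I * fderiv ℝ f p (0, 1, 0, 0)) = 0 ∧
  (∀ j : Fin n₁,
    (1/2 : ℂ) * (fderiv ℝ f p (0, 0, (0, Pi.single j 1), 0)
        + Complex.I * fderiv ℝ f p (0, 0, (0, Pi.single j Complex.I), 0))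
      - Complex.I * p.2.2.1.2 j * fderiv ℝ f p (0, 0, (1, 0), 0) = 0) ∧
  (∀ j : Fin n₂,
    (1/2 : ℂ) * (fderiv ℝ f p (0, 0, 0, (0, Pi.single j 1))
        + Complex.I * fderiv ℝ f p (0, 0, 0, (0, Pi.single j Complex.I)))
      - Complex.I * p.2.2.2.2 j * fderiv ℝ f p (0, 0, 0, (1, 0)) = 0)

open ContinuousLinearMap in
lemma core {n : ℕ} {E : Type*} [NormedAddCommGroup E] [NormedSpace ℝ E]
    (f : E → ℂ) (U : Set E) (hU : IsOpen U) (hf : ContDiffOn ℝ 2 f U)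
    (L : Heis n →L[ℝ] E) (zc : E →L[ℝ] ℂ) (e : Heis n → E)
    (he : ∀ h, HasFDerivAt e L h) (heU : ∀ h, e h ∈ U)
    (j : Fin n)
    (hzL : ∀ v : Heis n, zc (L v) = v.2 j)
    (hze : ∀ h : Heis n, zc (e h) = h.2 j)
    (hZ : ∀ q ∈ U, fderiv ℝ f q (L (2 * (zc q).im, Pi.single j 1))
        + Complex.I * fderiv ℝ f q (L (-2 * (zc q).re, Pi.single j Complex.I)) = 0)
    (g₀ : Heis n) :
    XD j (XD j (fun g => f (e g))) g₀ + YD j (YD j (fun g => f (e g))) g₀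
      = 4 * Complex.I * fderiv ℝ f (e g₀) (L (1, 0)) := by
  have hcd : ∀ q ∈ U, ContDiffAt ℝ 2 f q := fun q hq => hf.contDiffAt (hU.mem_nhds hq)
  have hdf : ∀ q ∈ U, DifferentiableAt ℝ f q := fun q hq =>
    (hcd q hq).differentiableAt (by simp)
  have hdf2 : ∀ q ∈ U, DifferentiableAt ℝ (fderiv ℝ f) q := fun q hq =>
    ((hcd q hq).fderiv_right (m := 1) (by norm_num)).differentiableAt (by simp)
  set p := e g₀ with hp
  have hpU : p ∈ U := heU g₀
  set D2 : E →L[ℝ] E →L[ℝ] ℂ := fderiv ℝ (fderiv ℝ f) p with hD2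
  -- vector maps
  set vm : Heis n → Heis n := fun h => (2 * (h.2 j).im, Pi.single j 1) with hvmdef
  set wm : Heis n → Heis n := fun h => (-2 * (h.2 j).re, Pi.single j Complex.I) with hwmdef
  set Mv : Heis n →L[ℝ] Heis n :=
    ((2:ℝ) • (Complex.imCLM.comp ((ContinuousLinearMap.proj j).comp
      (ContinuousLinearMap.snd ℝ ℝ (Fin n → ℂ))))).prod 0 with hMv
  set Mw : Heis n →L[ℝ] Heis n :=
    ((-2:ℝ) • (Complex.reCLM.comp ((ContinuousLinearMap.proj j).comp
      (ContinuousLinearMap.snd ℝ ℝ (Fin n → ℂ))))).prod 0 with hMw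
  have hMv_apply : ∀ u : Heis n, Mv u = (2 * (u.2 j).im, 0) := by
    intro u; simp [hMv]
  have hMw_apply : ∀ u : Heis n, Mw u = (-2 * (u.2 j).re, 0) := by
    intro u; simp [hMw]
  have hvm : ∀ h, HasFDerivAt vm Mv h := by
    intro h
    have : vm = fun h => Mv h + ((0:ℝ), Pi.single j (1:ℂ)) := by
      funext h; rw [hMv_apply]; simp [hvmdef, Prod.ext_iff]
    rw [this]; exact Mv.hasFDerivAt.add_const _
  have hwm : ∀ h, HasFDerivAt wm Mw h := by
    intro h
    have : wm = fun h => Mw h + ((0:ℝ), Pi.single j (Complex.I)) := by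
      funext h; rw [hMw_apply]; simp [hwmdef, Prod.ext_iff]
    rw [this]; exact Mw.hasFDerivAt.add_const _
  -- first derivative of the restriction
  have step1 : ∀ h, fderiv ℝ (fun g => f (e g)) h = (fderiv ℝ f (e h)).comp L := by
    intro h
    exact (((hdf _ (heU h)).hasFDerivAt).comp h (he h)).fderiv
  have stepX1 : ∀ h, XD j (fun g => f (e g)) h = fderiv ℝ f (e h) (L (vm h)) := by
    intro h; rw [XD, step1]; rfl
  have stepY1 : ∀ h, YD j (fun g => f (e g)) h = fderiv ℝ f (e h) (L (wm h)) := by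
    intro h; rw [YD, step1]; rfl
  -- second derivatives
  have hφ : ∀ h, HasFDerivAt (fun h => fderiv ℝ f (e h) (L (vm h)))
      (((fderiv ℝ f (e h)).comp (L.comp Mv))
        + ((fderiv ℝ (fderiv ℝ f) (e h)).comp L).flip (L (vm h))) h := by
    intro h
    exact HasFDerivAt.clm_apply ((hdf2 _ (heU h)).hasFDerivAt.comp h (he h))
      (L.hasFDerivAt.comp h (hvm h))
  have hψ : ∀ h, HasFDerivAt (fun h => fderiv ℝ f (e h) (L (wm h)))
      (((fderiv ℝ f (e h)).comp (L.comp Mw))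
        + ((fderiv ℝ (fderiv ℝ f) (e h)).comp L).flip (L (wm h))) h := by
    intro h
    exact HasFDerivAt.clm_apply ((hdf2 _ (heU h)).hasFDerivAt.comp h (he h))
      (L.hasFDerivAt.comp h (hwm h))
  have hX2 : XD j (XD j (fun g => f (e g))) g₀ = D2 (L (vm g₀)) (L (vm g₀)) := by
    rw [show XD j (fun g => f (e g)) = fun h => fderiv ℝ f (e h) (L (vm h)) from
      funext stepX1]
    rw [XD, (hφ g₀).fderiv]
    have hv : ((2 * (g₀.2 j).im : ℝ), Pi.single j (1:ℂ)) = vm g₀ := rfl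
    have h0 : Mv (vm g₀) = 0 := by rw [hMv_apply]; simp [hvmdef]
    rw [hv]
    simp only [ContinuousLinearMap.add_apply, ContinuousLinearMap.coe_comp',
      Function.comp_apply, ContinuousLinearMap.flip_apply]
    rw [h0, map_zero, map_zero, ← hp, ← hD2]
    simp
  have hY2 : YD j (YD j (fun g => f (e g))) g₀ = D2 (L (wm g₀)) (L (wm g₀)) := by
    rw [show YD j (fun g => f (e g)) = fun h => fderiv ℝ f (e h) (L (wm h)) from
      funext stepY1]
    rw [YD, (hψ g₀).fderiv]
    have hv : ((-2 * (g₀.2 j).re : ℝ), Pi.single j Complex.I) = wm g₀ := rfl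
    have h0 : Mw (wm g₀) = 0 := by rw [hMw_apply]; simp [hwmdef]
    rw [hv]
    simp only [ContinuousLinearMap.add_apply, ContinuousLinearMap.coe_comp',
      Function.comp_apply, ContinuousLinearMap.flip_apply]
    rw [h0, map_zero, map_zero, ← hp, ← hD2]
    simp
  -- differentiate the holomorphy identity
  set Nv : E →L[ℝ] Heis n := ((2:ℝ) • (Complex.imCLM.comp zc)).prod 0 with hNv
  set Nw : E →L[ℝ] Heis n := ((-2:ℝ) • (Complex.reCLM.comp zc)).prod 0 with hNw
  have hNv_apply : ∀ u : E, Nv u = (2 * (zc u).im, 0) := by intro u; simp [hNv]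
  have hNw_apply : ∀ u : E, Nw u = (-2 * (zc u).re, 0) := by intro u; simp [hNw]
  have hvq : ∀ q : E, HasFDerivAt (fun q : E => (2 * (zc q).im, Pi.single j (1:ℂ)) : E → Heis n) Nv q := by
    intro q
    have : (fun q : E => ((2 * (zc q).im, Pi.single j (1:ℂ)) : Heis n))
        = fun q => Nv q + ((0:ℝ), Pi.single j (1:ℂ)) := by
      funext q; rw [hNv_apply]; simp [Prod.ext_iff]
    rw [this]; exact Nv.hasFDerivAt.add_const _
  have hwq : ∀ q : E, HasFDerivAt (fun q : E => (-2 * (zc q).re, Pi.single j Complex.I) : E → Heis n) Nw q := by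
    intro q
    have : (fun q : E => ((-2 * (zc q).re, Pi.single j Complex.I) : Heis n))
        = fun q => Nw q + ((0:ℝ), Pi.single j Complex.I) := by
      funext q; rw [hNw_apply]; simp [Prod.ext_iff]
    rw [this]; exact Nw.hasFDerivAt.add_const _
  have hΦC : HasFDerivAt (fun q => fderiv ℝ f q (L (2 * (zc q).im, Pi.single j 1))
      + Complex.I * fderiv ℝ f q (L (-2 * (zc q).re, Pi.single j Complex.I)))
    ((((fderiv ℝ f p).comp (L.comp Nv) + D2.flip (L (2 * (zc p).im, Pi.single j 1)))
      + Complex.I • ((fderiv ℝ f p).comp (L.comp Nw)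
          + D2.flip (L (-2 * (zc p).re, Pi.single j Complex.I))))) p := by
    have h1 : HasFDerivAt (fun q => fderiv ℝ f q (L (2 * (zc q).im, Pi.single j 1)))
        ((fderiv ℝ f p).comp (L.comp Nv) + D2.flip (L (2 * (zc p).im, Pi.single j 1))) p := by
      have := HasFDerivAt.clm_apply (hdf2 p hpU).hasFDerivAt
        (L.hasFDerivAt.comp p (hvq p))
      exact this
    have h2 : HasFDerivAt (fun q => fderiv ℝ f q (L (-2 * (zc q).re, Pi.single j Complex.I)))
        ((fderiv ℝ f p).comp (L.comp Nw) + D2.flip (L (-2 * (zc p).re, Pi.single j Complex.I))) p := by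
      have := HasFDerivAt.clm_apply (hdf2 p hpU).hasFDerivAt
        (L.hasFDerivAt.comp p (hwq p))
      exact this
    exact h1.add (HasFDerivAt.const_mul (𝕜 := ℝ) h2 Complex.I)
  have hΦ0 : HasFDerivAt (fun q => fderiv ℝ f q (L (2 * (zc q).im, Pi.single j 1))
      + Complex.I * fderiv ℝ f q (L (-2 * (zc q).re, Pi.single j Complex.I)))
      (0 : E →L[ℝ] ℂ) p := by
    apply (hasFDerivAt_const (0:ℂ) p).congr_of_eventuallyEq
    filter_upwards [hU.mem_nhds hpU] with q hq
    exact hZ q hq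
  have hCeq := hΦC.unique hΦ0
  -- notation
  set V : E := L (vm g₀) with hV
  set W : E := L (wm g₀) with hW
  set S : ℂ := fderiv ℝ f p (L (1, 0)) with hS
  have hzcp : zc p = g₀.2 j := hze g₀
  have hLvmp : L (2 * (zc p).im, Pi.single j (1:ℂ)) = V := by rw [hzcp, hV]
  have hLwmp : L (-2 * (zc p).re, Pi.single j Complex.I) = W := by rw [hzcp, hW]
  have hzcV : zc V = 1 := by rw [hV, hzL]; simp [hvmdef]
  have hzcW : zc W = Complex.I := by rw [hW, hzL]; simp [hwmdef]
  -- evaluate C at W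
  have e1 : 2 * S + D2 W V + Complex.I * (D2 W W) = 0 := by
    have := DFunLike.congr_fun hCeq W
    simp only [ContinuousLinearMap.add_apply, ContinuousLinearMap.coe_comp', Function.comp_apply,
      ContinuousLinearMap.flip_apply, ContinuousLinearMap.smul_apply, smul_eq_mul,
      ContinuousLinearMap.zero_apply, hLvmp, hLwmp] at this
    rw [hNv_apply, hNw_apply, hzcW] at this
    simp only [Complex.I_im, Complex.I_re, mul_one, mul_zero, neg_zero] at this
    have h20 : ((2:ℝ), (0 : Fin n → ℂ)) = (2:ℝ) • ((1:ℝ), (0 : Fin n → ℂ)) := by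
      simp [Prod.ext_iff]
    have h00 : ((0 :ℝ), (0 : Fin n → ℂ)) = (0 : Heis n) := rfl
    rw [h20, h00, map_smul, map_smul, map_zero, map_zero] at this
    rw [← hS] at this
    rw [show ((2:ℝ) • S) = 2 * S by rw [Complex.real_smul]; norm_num] at this
    linear_combination this
  -- evaluate C at V
  have e2 : D2 V V + Complex.I * (D2 V W) - 2 * Complex.I * S = 0 := by
    have := DFunLike.congr_fun hCeq V
    simp only [ContinuousLinearMap.add_apply, ContinuousLinearMap.coe_comp', Function.comp_apply,
      ContinuousLinearMap.flip_apply, ContinuousLinearMap.smul_apply, smul_eq_mul,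
      ContinuousLinearMap.zero_apply, hLvmp, hLwmp] at this
    rw [hNv_apply, hNw_apply, hzcV] at this
    simp only [Complex.one_im, Complex.one_re, mul_one, mul_zero] at this
    have h20 : ((-2 :ℝ), (0 : Fin n → ℂ)) = (-2:ℝ) • ((1:ℝ), (0 : Fin n → ℂ)) := by
      simp [Prod.ext_iff]
    have h00 : ((0 :ℝ), (0 : Fin n → ℂ)) = (0 : Heis n) := rfl
    rw [h20, h00, map_smul, map_smul, map_zero, map_zero] at this
    rw [← hS] at this
    rw [show ((-2:ℝ) • S) = -2 * S by rw [Complex.real_smul]; norm_num] at this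
    linear_combination this
  have hsym : D2 V W = D2 W V := (hcd p hpU).isSymmSndFDerivAt (by simp) V W
  rw [hX2, hY2]
  linear_combination e2 - Complex.I * e1 - Complex.I * hsym
    + (D2 W W) * Complex.I_sq

/-- A C² holomorphic function on the flat model
`𝒰 = ℝ₊² × ℋ_{n₁} × ℋ_{n₂}` satisfies the heat equations
`(∂/∂t_α + Δ_α) f = 0` for `α = 1, 2`. -/
theorem holomorphic_satisfies_heat_equations (n₁ n₂ : ℕ) (hn₁ : 0 < n₁) (hn₂ : 0 < n₂)
    (f : FlatPt n₁ n₂ → ℂ)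
    (hf : ContDiffOn ℝ 2 f {p : FlatPt n₁ n₂ | 0 < p.1 ∧ 0 < p.2.1})
    (hholo : ∀ p : FlatPt n₁ n₂, 0 < p.1 → 0 < p.2.1 → IsFlatHolomorphicAt n₁ n₂ f p) :
    ∀ p : FlatPt n₁ n₂, 0 < p.1 → 0 < p.2.1 →
      (fderiv ℝ f p (1, 0, 0, 0)
        + subLaplacian n₁ (fun g => f (p.1, p.2.1, g, p.2.2.2)) p.2.2.1 = 0) ∧
      (fderiv ℝ f p (0, 1, 0, 0)
        + subLaplacian n₂ (fun g => f (p.1, p.2.1, p.2.2.1, g)) p.2.2.2 = 0) := by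
  intro p ht1 ht2
  set U : Set (FlatPt n₁ n₂) := {p : FlatPt n₁ n₂ | 0 < p.1 ∧ 0 < p.2.1} with hUdef
  have hUopen : IsOpen U := by
    apply IsOpen.inter
    · exact isOpen_lt continuous_const continuous_fst
    · exact isOpen_lt continuous_const (continuous_fst.comp continuous_snd)
  have hpU : p ∈ U := ⟨ht1, ht2⟩
  constructor
  · -- α = 1
    set L₁ : Heis n₁ →L[ℝ] FlatPt n₁ n₂ :=
      ContinuousLinearMap.prod 0 (ContinuousLinearMap.prod 0
        (ContinuousLinearMap.prod (ContinuousLinearMap.id ℝ (Heis n₁)) 0)) with hL₁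
    have he : ∀ h : Heis n₁,
        HasFDerivAt (fun g : Heis n₁ => ((p.1, p.2.1, g, p.2.2.2) : FlatPt n₁ n₂)) L₁ h := by
      intro h
      exact HasFDerivAt.prodMk (hasFDerivAt_const p.1 h) (HasFDerivAt.prodMk (hasFDerivAt_const p.2.1 h)
        (HasFDerivAt.prodMk (hasFDerivAt_id h) (hasFDerivAt_const p.2.2.2 h)))
    have heU : ∀ h : Heis n₁, ((p.1, p.2.1, h, p.2.2.2) : FlatPt n₁ n₂) ∈ U := fun h => ⟨ht1, ht2⟩
    have key : ∀ j : Fin n₁,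
        XD j (XD j (fun g => f (p.1, p.2.1, g, p.2.2.2))) p.2.2.1
          + YD j (YD j (fun g => f (p.1, p.2.1, g, p.2.2.2))) p.2.2.1
        = 4 * Complex.I * fderiv ℝ f p (0, 0, (1, 0), 0) := by
      intro j
      set zc : FlatPt n₁ n₂ →L[ℝ] ℂ :=
        (ContinuousLinearMap.proj j).comp ((ContinuousLinearMap.snd ℝ ℝ (Fin n₁ → ℂ)).comp
          ((ContinuousLinearMap.fst ℝ (Heis n₁) (Heis n₂)).comp
            ((ContinuousLinearMap.snd ℝ ℝ (Heis n₁ × Heis n₂)).comp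
              (ContinuousLinearMap.snd ℝ ℝ (ℝ × Heis n₁ × Heis n₂))))) with hzc
      have hzcq : ∀ q : FlatPt n₁ n₂, zc q = q.2.2.1.2 j := fun q => rfl
      have hzL : ∀ v : Heis n₁, zc (L₁ v) = v.2 j := fun v => rfl
      have hze : ∀ h : Heis n₁, zc ((p.1, p.2.1, h, p.2.2.2) : FlatPt n₁ n₂) = h.2 j :=
        fun h => rfl
      have hZ : ∀ q ∈ U, fderiv ℝ f q (L₁ (2 * (zc q).im, Pi.single j 1))
          + Complex.I * fderiv ℝ f q (L₁ (-2 * (zc q).re, Pi.single j Complex.I)) = 0 := by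
        intro q hq
        have h3 := (hholo q hq.1 hq.2).2.2.1 j
        set z : ℂ := q.2.2.1.2 j with hz
        have hv1 : L₁ ((2 * (zc q).im : ℝ), Pi.single j (1:ℂ))
            = ((0:ℝ), (0:ℝ), ((0:ℝ), Pi.single j (1:ℂ)), (0:Heis n₂))
              + (2 * z.im : ℝ) • ((0:ℝ), (0:ℝ), ((1:ℝ), (0:Fin n₁ → ℂ)), (0:Heis n₂)) := by
          rw [hzcq]
          simp [hL₁, Prod.ext_iff, hz]
        have hv2 : L₁ ((-2 * (zc q).re : ℝ), Pi.single j Complex.I)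
            = ((0:ℝ), (0:ℝ), ((0:ℝ), Pi.single j Complex.I), (0:Heis n₂))
              + (-2 * z.re : ℝ) • ((0:ℝ), (0:ℝ), ((1:ℝ), (0:Fin n₁ → ℂ)), (0:Heis n₂)) := by
          rw [hzcq]
          simp [hL₁, Prod.ext_iff, hz]
        rw [hv1, hv2, map_add, map_add, map_smul, map_smul, Complex.real_smul,
          Complex.real_smul]
        push_cast
        linear_combination 2 * h3
          - 2 * Complex.I * (fderiv ℝ f q (0, 0, (1, 0), 0)) * (Complex.re_add_im z)
          + 2 * (z.im:ℂ) * (fderiv ℝ f q (0, 0, (1, 0), 0)) * Complex.I_sq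
      have := core f U hUopen hf L₁ zc (fun g => (p.1, p.2.1, g, p.2.2.2)) he heU j hzL hze hZ
        p.2.2.1
      have hL1v : L₁ ((1:ℝ), (0 : Fin n₁ → ℂ))
          = ((0:ℝ), (0:ℝ), ((1:ℝ), (0:Fin n₁ → ℂ)), (0:Heis n₂)) := by
        simp [hL₁, Prod.ext_iff]
      rw [hL1v] at this
      exact this
    have h1 := (hholo p ht1 ht2).1
    rw [subLaplacian]
    rw [Finset.sum_congr rfl (fun j _ => key j), Finset.sum_const, Finset.card_univ,
      Fintype.card_fin, nsmul_eq_mul]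
    have hn : (n₁:ℂ) ≠ 0 := Nat.cast_ne_zero.mpr hn₁.ne'
    field_simp
    linear_combination (-2*Complex.I)*h1
      + (fderiv ℝ f p ((1:ℝ), (0:ℝ), (0:Heis n₁), (0:Heis n₂)))*Complex.I_sq
  · -- α = 2
    set L₂ : Heis n₂ →L[ℝ] FlatPt n₁ n₂ :=
      ContinuousLinearMap.prod 0 (ContinuousLinearMap.prod 0
        (ContinuousLinearMap.prod 0 (ContinuousLinearMap.id ℝ (Heis n₂)))) with hL₂
    have he : ∀ h : Heis n₂,
        HasFDerivAt (fun g : Heis n₂ => ((p.1, p.2.1, p.2.2.1, g) : FlatPt n₁ n₂)) L₂ h := by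
      intro h
      exact HasFDerivAt.prodMk (hasFDerivAt_const p.1 h) (HasFDerivAt.prodMk (hasFDerivAt_const p.2.1 h)
        (HasFDerivAt.prodMk (hasFDerivAt_const p.2.2.1 h) (hasFDerivAt_id h)))
    have heU : ∀ h : Heis n₂, ((p.1, p.2.1, p.2.2.1, h) : FlatPt n₁ n₂) ∈ U := fun h => ⟨ht1, ht2⟩
    have key : ∀ j : Fin n₂,
        XD j (XD j (fun g => f (p.1, p.2.1, p.2.2.1, g))) p.2.2.2
          + YD j (YD j (fun g => f (p.1, p.2.1, p.2.2.1, g))) p.2.2.2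
        = 4 * Complex.I * fderiv ℝ f p (0, 0, 0, (1, 0)) := by
      intro j
      set zc : FlatPt n₁ n₂ →L[ℝ] ℂ :=
        (ContinuousLinearMap.proj j).comp ((ContinuousLinearMap.snd ℝ ℝ (Fin n₂ → ℂ)).comp
          ((ContinuousLinearMap.snd ℝ (Heis n₁) (Heis n₂)).comp
            ((ContinuousLinearMap.snd ℝ ℝ (Heis n₁ × Heis n₂)).comp
              (ContinuousLinearMap.snd ℝ ℝ (ℝ × Heis n₁ × Heis n₂))))) with hzc
      have hzcq : ∀ q : FlatPt n₁ n₂, zc q = q.2.2.2.2 j := fun q => rfl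
      have hzL : ∀ v : Heis n₂, zc (L₂ v) = v.2 j := fun v => rfl
      have hze : ∀ h : Heis n₂, zc ((p.1, p.2.1, p.2.2.1, h) : FlatPt n₁ n₂) = h.2 j :=
        fun h => rfl
      have hZ : ∀ q ∈ U, fderiv ℝ f q (L₂ (2 * (zc q).im, Pi.single j 1))
          + Complex.I * fderiv ℝ f q (L₂ (-2 * (zc q).re, Pi.single j Complex.I)) = 0 := by
        intro q hq
        have h3 := (hholo q hq.1 hq.2).2.2.2 j
        set z : ℂ := q.2.2.2.2 j with hz
        have hv1 : L₂ ((2 * (zc q).im : ℝ), Pi.single j (1:ℂ))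
            = ((0:ℝ), (0:ℝ), (0:Heis n₁), ((0:ℝ), Pi.single j (1:ℂ)))
              + (2 * z.im : ℝ) • ((0:ℝ), (0:ℝ), (0:Heis n₁), ((1:ℝ), (0:Fin n₂ → ℂ))) := by
          rw [hzcq]
          simp [hL₂, Prod.ext_iff, hz]
        have hv2 : L₂ ((-2 * (zc q).re : ℝ), Pi.single j Complex.I)
            = ((0:ℝ), (0:ℝ), (0:Heis n₁), ((0:ℝ), Pi.single j Complex.I))
              + (-2 * z.re : ℝ) • ((0:ℝ), (0:ℝ), (0:Heis n₁), ((1:ℝ), (0:Fin n₂ → ℂ))) := by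
          rw [hzcq]
          simp [hL₂, Prod.ext_iff, hz]
        rw [hv1, hv2, map_add, map_add, map_smul, map_smul, Complex.real_smul,
          Complex.real_smul]
        push_cast
        linear_combination 2 * h3
          - 2 * Complex.I * (fderiv ℝ f q (0, 0, 0, (1, 0))) * (Complex.re_add_im z)
          + 2 * (z.im:ℂ) * (fderiv ℝ f q (0, 0, 0, (1, 0))) * Complex.I_sq
      have := core f U hUopen hf L₂ zc (fun g => (p.1, p.2.1, p.2.2.1, g)) he heU j hzL hze hZ
        p.2.2.2
      have hL2v : L₂ ((1:ℝ), (0 : Fin n₂ → ℂ))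
          = ((0:ℝ), (0:ℝ), (0:Heis n₁), ((1:ℝ), (0:Fin n₂ → ℂ))) := by
        simp [hL₂, Prod.ext_iff]
      rw [hL2v] at this
      exact this
    have h1 := (hholo p ht1 ht2).2.1
    rw [subLaplacian]
    rw [Finset.sum_congr rfl (fun j _ => key j), Finset.sum_const, Finset.card_univ,
      Fintype.card_fin, nsmul_eq_mul]
    have hn : (n₂:ℂ) ≠ 0 := Nat.cast_ne_zero.mpr hn₂.ne'
    field_simp
    linear_combination (-2*Complex.I)*h1
      + (fderiv ℝ f p ((0:ℝ), (1:ℝ), (0:Heis n₁), (0:Heis n₂)))*Complex.I_sq
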